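/- Let A = K[x,y]/(x², y², xy) over a field K. Then every submodule of a free A-module of finite rank is either semisimple or has a projective (free) direct summand; in particular, every finite-dimensional A-module of Loewy length 2 without projective direct summands does not embed into any finite-rank free A-module. -/

import Mathlib

set_option synthInstance.maxHeartbeats 1000000
set_option maxHeartbeats 1000000

open CategoryTheory

namespace St17

abbrev A (K : Type) [Field K] : Type :=
  MvPolynomial (Fin 2) K ⧸
    (Ideal.span {MvPolynomial.X 0 ^ 2, MvPolynomial.X 1 ^ 2,
      MvPolynomial.X 0 * MvPolynomial.X 1} : Ideal (MvPolynomial (Fin 2) K))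

noncomputable def x (K : Type) [Field K] : A K :=
  Ideal.Quotient.mk _ (MvPolynomial.X 0)

noncomputable def y (K : Type) [Field K] : A K :=
  Ideal.Quotient.mk _ (MvPolynomial.X 1)

variable (K : Type) [Field K]

private lemma hxx : x K * x K = 0 := by
  rw [x, ← map_mul, Ideal.Quotient.eq_zero_iff_mem]
  refine Ideal.subset_span ?_
  rw [← sq]; exact Set.mem_insert _ _

private lemma hyy : y K * y K = 0 := by
  rw [y, ← map_mul, Ideal.Quotient.eq_zero_iff_mem]
  refine Ideal.subset_span ?_
  rw [← sq]; right; exact Set.mem_insert _ _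

private lemma hxy : x K * y K = 0 := by
  rw [x, y, ← map_mul, Ideal.Quotient.eq_zero_iff_mem]
  refine Ideal.subset_span ?_
  right; right; rfl

private lemma nontrivialA : Nontrivial (A K) := by
  refine Ideal.Quotient.nontrivial_iff.mpr ?_
  intro htop
  have h1 : (1 : MvPolynomial (Fin 2) K) ∈
      (Ideal.span {MvPolynomial.X 0 ^ 2, MvPolynomial.X 1 ^ 2,
        MvPolynomial.X 0 * MvPolynomial.X 1} : Ideal (MvPolynomial (Fin 2) K)) := by
    rw [htop]; trivial
  have hle : (Ideal.span {MvPolynomial.X 0 ^ 2, MvPolynomial.X 1 ^ 2,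
      MvPolynomial.X 0 * MvPolynomial.X 1} : Ideal (MvPolynomial (Fin 2) K)) ≤
      RingHom.ker (MvPolynomial.constantCoeff (σ := Fin 2) (R := K)) := by
    rw [Ideal.span_le]
    rintro p (rfl | rfl | rfl) <;> simp [RingHom.mem_ker]
  have := hle h1
  simp [RingHom.mem_ker] at this

private lemma repr_lemma (a : A K) :
    ∃ (c : K) (s t : A K), a = algebraMap K (A K) c + x K * s + y K * t := by
  obtain ⟨p, rfl⟩ := Ideal.Quotient.mk_surjective a
  induction p using MvPolynomial.induction_on with
  | C c =>
    refine ⟨c, 0, 0, ?_⟩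
    rw [← MvPolynomial.algebraMap_eq, Ideal.Quotient.mk_algebraMap]
    ring
  | add p q hp hq =>
    obtain ⟨c, s, t, hc⟩ := hp
    obtain ⟨c', s', t', hc'⟩ := hq
    refine ⟨c + c', s + s', t + t', ?_⟩
    rw [map_add, hc, hc', map_add]
    ring
  | mul_X p n hp =>
    obtain ⟨c, s, t, hc⟩ := hp
    have h2 : n = 0 ∨ n = 1 := by omega
    have hmk0 : (Ideal.Quotient.mk _ (MvPolynomial.X 0) : A K) = x K := rfl
    have hmk1 : (Ideal.Quotient.mk _ (MvPolynomial.X 1) : A K) = y K := rfl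
    rcases h2 with rfl | rfl
    · refine ⟨0, algebraMap K (A K) c, 0, ?_⟩
      rw [map_mul, hmk0, hc, map_zero]
      linear_combination s * hxx K + t * hxy K
    · refine ⟨0, 0, algebraMap K (A K) c, ?_⟩
      rw [map_mul, hmk1, hc, map_zero]
      linear_combination s * hxy K + t * hyy K

private lemma isUnit_of_x (a : A K) (h : x K * a ≠ 0) : IsUnit a := by
  obtain ⟨c, s, t, rfl⟩ := repr_lemma K a
  have hc : c ≠ 0 := by
    rintro rfl
    apply h
    rw [map_zero]
    linear_combination s * hxx K + t * hxy K
  have hcc : algebraMap K (A K) c * algebraMap K (A K) c⁻¹ = 1 := by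
    rw [← map_mul, mul_inv_cancel₀ hc, map_one]
  set d := algebraMap K (A K) c⁻¹ with hd
  refine IsUnit.of_mul_eq_one (d - d * d * (x K * s + y K * t)) ?_
  linear_combination (1 - d * (x K * s + y K * t)) * hcc -
    d * d * (s * s * hxx K + 2 * s * t * hxy K + t * t * hyy K)

private lemma isUnit_of_y (a : A K) (h : y K * a ≠ 0) : IsUnit a := by
  obtain ⟨c, s, t, rfl⟩ := repr_lemma K a
  have hc : c ≠ 0 := by
    rintro rfl
    apply h
    rw [map_zero]
    linear_combination s * hxy K + t * hyy K
  have hcc : algebraMap K (A K) c * algebraMap K (A K) c⁻¹ = 1 := by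
    rw [← map_mul, mul_inv_cancel₀ hc, map_one]
  set d := algebraMap K (A K) c⁻¹ with hd
  refine IsUnit.of_mul_eq_one (d - d * d * (x K * s + y K * t)) ?_
  linear_combination (1 - d * (x K * s + y K * t)) * hcc -
    d * d * (s * s * hxx K + 2 * s * t * hxy K + t * t * hyy K)

set_option maxHeartbeats 8000000 in
private lemma part1 (n : ℕ) (N : Submodule (A K) (Fin n → A K)) :
    (∀ v ∈ N, x K • v = 0 ∧ y K • v = 0) ∨
    (∃ P Q : Submodule (A K) N, IsCompl P Q ∧ P ≠ ⊥ ∧ Module.Projective (A K) P) := by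
  have := nontrivialA K
  by_cases hss : ∀ v ∈ N, x K • v = 0 ∧ y K • v = 0
  · exact Or.inl hss
  right
  push_neg at hss
  obtain ⟨v, hv, hvne⟩ := hss
  -- find a coordinate which is a unit
  have hunit : ∃ i, IsUnit (v i) := by
    by_cases hx : x K • v = 0
    · obtain ⟨i, hi⟩ := Function.ne_iff.mp (hvne hx)
      refine ⟨i, isUnit_of_y K _ ?_⟩
      simpa [Pi.smul_apply, smul_eq_mul] using hi
    · obtain ⟨i, hi⟩ := Function.ne_iff.mp hx
      refine ⟨i, isUnit_of_x K _ ?_⟩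
      simpa [Pi.smul_apply, smul_eq_mul] using hi
  obtain ⟨i, hu⟩ := hunit
  obtain ⟨u, hu⟩ := hu
  set w : A K := ((u⁻¹ : (A K)ˣ) : A K) with hw
  have hwv : w * v i = 1 := by rw [hw, ← hu]; exact Units.inv_mul u
  -- the splitting
  set f : N →ₗ[A K] A K := w • ((LinearMap.proj i).comp N.subtype) with hf
  set g : A K →ₗ[A K] N := LinearMap.toSpanSingleton (A K) N ⟨v, hv⟩ with hg
  have hfg : ∀ a : A K, f (g a) = a := by
    intro a
    simp only [hf, hg, LinearMap.smul_apply, LinearMap.comp_apply,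
      LinearMap.toSpanSingleton_apply, Submodule.coe_subtype, SetLike.val_smul,
      LinearMap.proj_apply, Pi.smul_apply, smul_eq_mul]
    calc w * (a * v i) = a * (w * v i) := by ring
      _ = a := by rw [hwv, mul_one]
  have hginj : Function.Injective g := by
    intro a b hab
    have := congrArg f hab
    rwa [hfg, hfg] at this
  refine ⟨LinearMap.range g, LinearMap.ker f, ?_, ?_, ?_⟩
  · constructor
    · rw [disjoint_iff]
      rw [Submodule.eq_bot_iff]
      rintro z ⟨⟨a, rfl⟩, hz2⟩
      have : f (g a) = 0 := hz2
      rw [hfg] at this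
      rw [this, map_zero]
    · rw [codisjoint_iff, eq_top_iff]
      intro z _
      have hz : z = g (f z) + (z - g (f z)) := by abel
      rw [hz]
      refine Submodule.add_mem_sup (LinearMap.mem_range_self _ _) ?_
      simp [LinearMap.mem_ker, map_sub, hfg]
  · intro hbot
    have h1 : g 1 ∈ LinearMap.range g := LinearMap.mem_range_self g 1
    rw [hbot, Submodule.mem_bot] at h1
    have h2 := hfg 1
    rw [h1, map_zero] at h2
    exact one_ne_zero h2.symm
  · have hAproj : Module.Projective (A K) (A K) := Module.Projective.of_free
    exact Module.Projective.of_equiv (R := A K) (M := A K)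
      (LinearEquiv.ofInjective g hginj)

theorem stmt17 (K : Type) [Field K] :
    (∀ (n : ℕ) (N : Submodule (A K) (Fin n → A K)),
      (∀ v ∈ N, x K • v = 0 ∧ y K • v = 0) ∨
      (∃ P Q : Submodule (A K) N, IsCompl P Q ∧ P ≠ ⊥ ∧ Module.Projective (A K) P))
    ∧ (∀ (M : Type) [AddCommGroup M] [Module (A K) M], Module.Finite (A K) M →
        (∃ m : M, ¬(x K • m = 0 ∧ y K • m = 0)) →
        (¬∃ P Q : Submodule (A K) M, IsCompl P Q ∧ P ≠ ⊥ ∧ Module.Projective (A K) P) →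
        ∀ (n : ℕ) (f : M →ₗ[A K] (Fin n → A K)), ¬Function.Injective f) := by
  refine ⟨part1 K, ?_⟩
  intro M _ _ _ hns hnp n f hf
  rcases part1 K n (LinearMap.range f) with hss | ⟨P, Q, hc, hP, hproj⟩
  · obtain ⟨m, hm⟩ := hns
    apply hm
    have h1 := hss (f m) (LinearMap.mem_range_self f m)
    constructor
    · apply hf
      rw [map_smul, map_zero]
      exact h1.1
    · apply hf
      rw [map_smul, map_zero]
      exact h1.2
  · apply hnp
    set e : M ≃ₗ[A K] LinearMap.range f := LinearEquiv.ofInjective f hf with he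
    set o : Submodule (A K) (LinearMap.range f) ≃o Submodule (A K) M :=
      Submodule.orderIsoMapComap e.symm with ho
    refine ⟨o P, o Q, o.isCompl hc, ?_, ?_⟩
    · intro hbot
      apply hP
      have : o P = o ⊥ := by rw [hbot, map_bot]
      exact o.injective this
    · have heq : (o P : Submodule (A K) M) = Submodule.map (e.symm : LinearMap.range f →ₗ[A K] M) P := by
        rfl
      rw [heq]
      exact Module.Projective.of_equiv (e.symm.submoduleMap P)

end St17
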